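/- Let n, k, l be natural numbers with k, l ≥ 3 and k + l ≤ n + 2, and work in the group algebra ℚ[S_n]. Suppose σ ∈ S_n moves at least k + l − 2 points and the coefficient of σ in the product s_k · s_l is nonzero. Then one of the following holds: σ has cycle type (a, b, 1^{n−a−b}) for some a, b ≥ 2 with a + b = k + l − 2; or k + l − 1 ≤ n and σ is a (k+l−1)-cycle; or k + l ≤ n and σ has cycle type (k, l, 1^{n−k−l}). -/

import Mathlib

/-- `classSum n m` is the sum, in the group algebra `ℚ[Sₙ]`, of all permutations
whose cycle type is the multiset `m` (parts of size 1 being suppressed, as in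
Mathlib's `Equiv.Perm.cycleType`). -/
noncomputable def classSum (n : ℕ) (m : Multiset ℕ) : MonoidAlgebra ℚ (Equiv.Perm (Fin n)) :=
  ∑ σ ∈ Finset.univ.filter (fun σ : Equiv.Perm (Fin n) => σ.cycleType = m),
    MonoidAlgebra.single σ (1 : ℚ)

/-- The cycle sum `sᵢ`: the sum of all `i`-cycles in `Sₙ` for `i ≥ 2`, and the
identity of `ℚ[Sₙ]` for `i ≤ 1`. -/
noncomputable def cycleSum (n i : ℕ) : MonoidAlgebra ℚ (Equiv.Perm (Fin n)) :=
  if i < 2 then 1 else classSum n {i}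

lemma classSum_apply (n : ℕ) (m : Multiset ℕ) (ρ : Equiv.Perm (Fin n)) :
    (classSum n m).coeff ρ = if ρ.cycleType = m then 1 else 0 := by
  classical
  unfold classSum
  rw [show ((∑ σ ∈ Finset.univ.filter (fun σ : Equiv.Perm (Fin n) => σ.cycleType = m),
      MonoidAlgebra.single σ (1 : ℚ)).coeff ρ)
      = ∑ σ ∈ Finset.univ.filter (fun σ : Equiv.Perm (Fin n) => σ.cycleType = m),
        (MonoidAlgebra.single σ (1 : ℚ)).coeff ρ from by
    rw [MonoidAlgebra.coeff_sum]; exact map_sum (Finsupp.applyAddHom ρ) _ _]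
  simp only [MonoidAlgebra.coeff_single, Finsupp.single_apply]
  rw [Finset.sum_ite_eq' (Finset.univ.filter fun σ' : Equiv.Perm (Fin n) => σ'.cycleType = m)
    ρ (fun _ => (1 : ℚ))]
  simp

/-- Key orbit lemma: if `π, τ` are cycles whose supports intersect inside `{x, y}`
with `x, y` in both supports, then every point of the union of the supports is on
the `(π*τ)`-cycle of `x` or of `y`. -/
lemma orbit_key {α : Type*} [Fintype α] [DecidableEq α] {π τ : Equiv.Perm α}
    (hπ : π.IsCycle) (hτ : τ.IsCycle) {x y : α}
    (hsub : π.support ∩ τ.support ⊆ {x, y})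
    (hx : x ∈ π.support ∩ τ.support) (hy : y ∈ π.support ∩ τ.support)
    {z : α} (hz : z ∈ π.support ∪ τ.support) :
    (π * τ).SameCycle z x ∨ (π * τ).SameCycle z y := by
  by_contra hcon
  push_neg at hcon
  set σ := π * τ with hσdef
  have hσapp : ∀ w, σ w = π (τ w) := fun w => rfl
  let O : Set α := {w | ∃ i : ℕ, (σ ^ i) z = w}
  have hzO : z ∈ O := ⟨0, rfl⟩
  have hOσ : ∀ w ∈ O, σ w ∈ O := by
    rintro w ⟨i, rfl⟩
    exact ⟨i + 1, by rw [pow_succ', Equiv.Perm.mul_apply]⟩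
  have hOx : x ∉ O := by
    rintro ⟨i, hi⟩
    exact hcon.1 ⟨(i : ℤ), by rw [zpow_natCast, hi]⟩
  have hOy : y ∉ O := by
    rintro ⟨i, hi⟩
    exact hcon.2 ⟨(i : ℤ), by rw [zpow_natCast, hi]⟩
  have hnotxy : ∀ w ∈ O, w ∉ ({x, y} : Finset α) := by
    intro w hw hmem
    rcases Finset.mem_insert.mp hmem with h | h
    · exact hOx (h ▸ hw)
    · exact hOy ((Finset.mem_singleton.mp h) ▸ hw)
  have hOπ : ∀ w ∈ O, π w ∈ O := by
    intro w hw
    by_cases hwA : w ∈ π.support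
    · have hwB : w ∉ τ.support := fun hwB =>
        hnotxy w hw (hsub (Finset.mem_inter.mpr ⟨hwA, hwB⟩))
      have h1 : σ w = π w := by rw [hσapp, Equiv.Perm.notMem_support.mp hwB]
      exact h1 ▸ hOσ w hw
    · rwa [Equiv.Perm.notMem_support.mp hwA]
  have hpow : ∀ (f : Equiv.Perm α), (∀ w ∈ O, f w ∈ O) →
      ∀ (j : ℕ), ∀ w ∈ O, (f ^ j) w ∈ O := by
    intro f hf j
    induction j with
    | zero => intro w hw; simpa using hw
    | succ j ih =>
      intro w hw
      rw [pow_succ, Equiv.Perm.mul_apply]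
      exact ih _ (hf w hw)
  have hOτ : ∀ w ∈ O, τ w ∈ O := by
    intro w hw
    by_cases hwB : w ∈ τ.support
    · by_cases hA : τ w ∈ π.support
      · exfalso
        have hτwB : τ w ∈ τ.support := Equiv.Perm.apply_mem_support.mpr hwB
        have hmem : τ w ∈ ({x, y} : Finset α) := hsub (Finset.mem_inter.mpr ⟨hA, hτwB⟩)
        have h1 : π (τ w) ∈ O := by
          have := hOσ w hw
          rwa [hσapp] at this
        have h2 : ∀ j : ℕ, (π ^ j) (π (τ w)) ∈ O := by
          intro j
          induction j with
          | zero => simpa using h1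
          | succ j ih =>
            have huA : (π ^ j) (π (τ w)) ∈ π.support := by
              rw [Equiv.Perm.pow_apply_mem_support, Equiv.Perm.apply_mem_support]
              exact hA
            have huB : (π ^ j) (π (τ w)) ∉ τ.support := fun h =>
              hnotxy _ ih (hsub (Finset.mem_inter.mpr ⟨huA, h⟩))
            have h3 : σ ((π ^ j) (π (τ w))) = π ((π ^ j) (π (τ w))) := by
              rw [hσapp, Equiv.Perm.notMem_support.mp huB]
            have h4 : π ((π ^ j) (π (τ w))) ∈ O := by
              have := hOσ _ ih
              rwa [h3] at this
            have h5 : (π ^ (j + 1)) (π (τ w)) = π ((π ^ j) (π (τ w))) := by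
              rw [pow_succ', Equiv.Perm.mul_apply]
            rwa [h5]
        have h6 : (π ^ (orderOf π - 1)) (π (τ w)) = τ w := by
          have h7 : (π ^ (orderOf π - 1)) (π (τ w)) = (π ^ (orderOf π - 1) * π) (τ w) := rfl
          rw [h7, ← pow_succ, Nat.sub_add_cancel (orderOf_pos π), pow_orderOf_eq_one]
          rfl
        exact hnotxy _ (h6 ▸ h2 (orderOf π - 1)) hmem
      · have h1 : σ w = τ w := by rw [hσapp, Equiv.Perm.notMem_support.mp hA]
        exact h1 ▸ hOσ w hw
    · rwa [Equiv.Perm.notMem_support.mp hwB]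
  rcases Finset.mem_union.mp hz with hzA | hzB
  · have hsc : π.SameCycle z x :=
      hπ.sameCycle (Equiv.Perm.mem_support.mp hzA)
        (Equiv.Perm.mem_support.mp (Finset.mem_inter.mp hx).1)
    obtain ⟨i, _, hi⟩ := hsc.exists_pow_eq'
    exact hOx (hi ▸ hpow π hOπ i z hzO)
  · have hsc : τ.SameCycle z x :=
      hτ.sameCycle (Equiv.Perm.mem_support.mp hzB)
        (Equiv.Perm.mem_support.mp (Finset.mem_inter.mp hx).2)
    obtain ⟨i, _, hi⟩ := hsc.exists_pow_eq'
    exact hOx (hi ▸ hpow τ hOτ i z hzO)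

/-- Sign obstruction: the product of a `k`-cycle and an `l`-cycle cannot be a
single `(k+l-2)`-cycle. -/
lemma sign_ne {n k l : ℕ} (hk : 3 ≤ k) (hl : 3 ≤ l) {π τ : Equiv.Perm (Fin n)}
    (hπk : π.cycleType = {k}) (hτl : τ.cycleType = {l})
    (hσ : (π * τ).cycleType = {k + l - 2}) : False := by
  have h1 := Equiv.Perm.sign_of_cycleType (π * τ)
  rw [hσ] at h1
  have h2 := Equiv.Perm.sign_of_cycleType π
  rw [hπk] at h2
  have h3 := Equiv.Perm.sign_of_cycleType τ
  rw [hτl] at h3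
  rw [Equiv.Perm.sign_mul, h2, h3, ← pow_add] at h1
  simp only [Multiset.sum_singleton, Multiset.card_singleton] at h1
  have e : k + 1 + (l + 1) = (k + l - 2 + 1) + 3 := by omega
  rw [e, pow_add] at h1
  have h4 : ((-1 : ℤˣ)) ^ 3 = 1 := mul_left_cancel (h1.trans (mul_one _).symm)
  exact absurd h4 (by decide)

/-- Let `k, l ≥ 3` with `k + l ≤ n + 2`.  If `σ ∈ Sₙ` moves
at least `k + l − 2` points and the coefficient of `σ` in `s_k · s_l` is
nonzero, then either `σ` has cycle type `(a, b, 1^{n−a−b})` for some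
`a, b ≥ 2` with `a + b = k + l − 2`, or `k + l − 1 ≤ n` and `σ` is a
`(k+l−1)`-cycle, or `k + l ≤ n` and `σ` has cycle type `(k, l, 1^{n−k−l})`. -/
theorem cycleType_of_coeff_ne_zero (n k l : ℕ) (hk : 3 ≤ k) (hl : 3 ≤ l)
    (hn : k + l ≤ n + 2) (σ : Equiv.Perm (Fin n))
    (hsupp : k + l - 2 ≤ σ.support.card)
    (hcoeff : (classSum n {k} * classSum n {l}).coeff σ ≠ 0) :
    (∃ a b, 2 ≤ a ∧ 2 ≤ b ∧ a + b = k + l - 2 ∧ σ.cycleType = {a, b}) ∨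
    (k + l - 1 ≤ n ∧ σ.cycleType = {k + l - 1}) ∨
    (k + l ≤ n ∧ σ.cycleType = {k, l}) := by
  classical
  have hext : ∃ π τ : Equiv.Perm (Fin n),
      π.cycleType = {k} ∧ τ.cycleType = {l} ∧ π * τ = σ := by
    by_contra hcon
    push_neg at hcon
    apply hcoeff
    rw [MonoidAlgebra.mul_apply]
    rw [Finsupp.sum]
    apply Finset.sum_eq_zero
    intro a ha
    rw [Finsupp.sum]
    apply Finset.sum_eq_zero
    intro b hb
    have hak : a.cycleType = {k} := by
      have h := Finsupp.mem_support_iff.mp ha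
      rw [classSum_apply] at h
      by_contra hne
      rw [if_neg hne] at h
      exact h rfl
    have hbl : b.cycleType = {l} := by
      have h := Finsupp.mem_support_iff.mp hb
      rw [classSum_apply] at h
      by_contra hne
      rw [if_neg hne] at h
      exact h rfl
    rw [if_neg (hcon a b hak hbl)]
  obtain ⟨π, τ, hπk, hτl, hmul⟩ := hext
  have hπc : π.IsCycle := Equiv.Perm.card_cycleType_eq_one.mp (by rw [hπk]; rfl)
  have hτc : τ.IsCycle := Equiv.Perm.card_cycleType_eq_one.mp (by rw [hτl]; rfl)
  have hπcard : π.support.card = k := by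
    have h := Equiv.Perm.sum_cycleType π
    rw [hπk, Multiset.sum_singleton] at h
    exact h.symm
  have hτcard : τ.support.card = l := by
    have h := Equiv.Perm.sum_cycleType τ
    rw [hτl, Multiset.sum_singleton] at h
    exact h.symm
  have hsub2 : σ.support ⊆ π.support ∪ τ.support := by
    rw [← hmul]
    exact Equiv.Perm.support_mul_le π τ
  have hcards : (π.support ∪ τ.support).card + (π.support ∩ τ.support).card = k + l := by
    rw [Finset.card_union_add_card_inter, hπcard, hτcard]
  have hle : σ.support.card ≤ (π.support ∪ τ.support).card := Finset.card_le_card hsub2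
  have hun : (π.support ∪ τ.support).card ≤ n := by
    have h := Finset.card_le_univ (π.support ∪ τ.support)
    simpa using h
  have hsign : σ.cycleType = {k + l - 2} → False := fun h =>
    sign_ne hk hl hπk hτl (by rw [hmul]; exact h)
  have h012 : (π.support ∩ τ.support).card = 0 ∨ (π.support ∩ τ.support).card = 1 ∨
      (π.support ∩ τ.support).card = 2 := by omega
  rcases h012 with hc0 | hc1 | hc2
  · -- disjoint supports
    right; right
    have hdisj : π.Disjoint τ := by
      rw [Equiv.Perm.disjoint_iff_disjoint_support, Finset.disjoint_iff_inter_eq_empty]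
      exact Finset.card_eq_zero.mp hc0
    refine ⟨by omega, ?_⟩
    rw [← hmul, hdisj.cycleType_mul, hπk, hτl]
    rfl
  · -- supports share one point
    obtain ⟨x, hx1⟩ := Finset.card_eq_one.mp hc1
    have hxmem : x ∈ π.support ∩ τ.support := hx1 ▸ Finset.mem_singleton_self x
    have hall : ∀ z ∈ σ.support, σ.SameCycle z x := by
      intro z hzs
      have h := orbit_key hπc hτc (x := x) (y := x)
        (by rw [hx1]; intro w hw; simp [Finset.mem_singleton.mp hw])
        hxmem hxmem (hsub2 hzs)
      rw [hmul] at h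
      tauto
    have hpos : 0 < σ.support.card := by omega
    obtain ⟨w, hw⟩ := Finset.card_pos.mp hpos
    have hcyc : σ.IsCycle := by
      refine ⟨w, Equiv.Perm.mem_support.mp hw, fun u hu => ?_⟩
      exact (hall w hw).trans (hall u (Equiv.Perm.mem_support.mpr hu)).symm
    have hct : σ.cycleType = {σ.support.card} := by
      rw [hcyc.cycleType]
    have h1 : σ.support.card = k + l - 2 ∨ σ.support.card = k + l - 1 := by omega
    rcases h1 with h1 | h1
    · exact absurd (by rw [hct, h1] : σ.cycleType = {k + l - 2}) hsign
    · right; left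
      exact ⟨by omega, by rw [hct, h1]⟩
  · -- supports share two points
    obtain ⟨x, y, hxy, hxyeq⟩ := Finset.card_eq_two.mp hc2
    have hxmem : x ∈ π.support ∩ τ.support := by rw [hxyeq]; simp
    have hymem : y ∈ π.support ∩ τ.support := by rw [hxyeq]; simp
    have hall : ∀ z ∈ σ.support, σ.SameCycle z x ∨ σ.SameCycle z y := by
      intro z hzs
      have h := orbit_key hπc hτc (le_of_eq hxyeq) hxmem hymem (hsub2 hzs)
      rwa [hmul] at h
    have hscard : σ.support.card = k + l - 2 := by omega
    have hfac : ∀ c ∈ σ.cycleFactorsFinset, x ∈ c.support ∨ y ∈ c.support := by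
      intro c hc
      obtain ⟨hcyc, hceq⟩ := Equiv.Perm.mem_cycleFactorsFinset_iff.mp hc
      obtain ⟨z, hz1, -⟩ := hcyc
      have hzc : z ∈ c.support := Equiv.Perm.mem_support.mpr hz1
      have hzσ : z ∈ σ.support := Equiv.Perm.mem_support.mpr (by
        rw [← hceq z hzc]; exact hz1)
      have hc2' : c = σ.cycleOf z := Equiv.Perm.cycle_is_cycleOf hzc hc
      rcases hall z hzσ with h | h
      · left; rw [hc2']
        exact Equiv.Perm.mem_support_cycleOf_iff.mpr ⟨h, hzσ⟩
      · right; rw [hc2']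
        exact Equiv.Perm.mem_support_cycleOf_iff.mpr ⟨h, hzσ⟩
    have hcard2 : σ.cycleFactorsFinset.card ≤ 2 := by
      have hmapsto : ∀ c ∈ σ.cycleFactorsFinset,
          (if x ∈ c.support then x else y) ∈ ({x, y} : Finset (Fin n)) := by
        intro c _; split <;> simp
      have hinj : Set.InjOn (fun c : Equiv.Perm (Fin n) => if x ∈ c.support then x else y)
          σ.cycleFactorsFinset := by
        intro c1 hc1 c2 hc2' heq
        by_contra hne
        have hdisj := Equiv.Perm.cycleFactorsFinset_pairwise_disjoint σ hc1 hc2' hne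
        have hdisj' := Equiv.Perm.disjoint_iff_disjoint_support.mp hdisj
        simp only at heq
        by_cases h1 : x ∈ c1.support <;> by_cases h2 : x ∈ c2.support
        · exact Finset.disjoint_left.mp hdisj' h1 h2
        · rw [if_pos h1, if_neg h2] at heq; exact hxy heq
        · rw [if_neg h1, if_pos h2] at heq; exact hxy heq.symm
        · have hy1 : y ∈ c1.support := (hfac c1 hc1).resolve_left h1
          have hy2 : y ∈ c2.support := (hfac c2 hc2').resolve_left h2
          exact Finset.disjoint_left.mp hdisj' hy1 hy2
      calc σ.cycleFactorsFinset.card ≤ ({x, y} : Finset (Fin n)).card :=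
            Finset.card_le_card_of_injOn _ hmapsto hinj
        _ = 2 := Finset.card_pair hxy
    have hctcard : Multiset.card σ.cycleType ≤ 2 := by
      rw [Equiv.Perm.cycleType_def, Multiset.card_map]
      exact hcard2
    have hsum : σ.cycleType.sum = k + l - 2 := by
      rw [Equiv.Perm.sum_cycleType, hscard]
    have hd012 : Multiset.card σ.cycleType = 0 ∨ Multiset.card σ.cycleType = 1 ∨
        Multiset.card σ.cycleType = 2 := by omega
    rcases hd012 with hd0 | hd1 | hd2
    · exfalso
      rw [Multiset.card_eq_zero.mp hd0] at hsum
      simp at hsum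
      omega
    · exfalso
      obtain ⟨m, hm⟩ := Multiset.card_eq_one.mp hd1
      rw [hm, Multiset.sum_singleton] at hsum
      exact hsign (by rw [hm, hsum])
    · obtain ⟨a, b, hab⟩ := Multiset.card_eq_two.mp hd2
      left
      refine ⟨a, b, Equiv.Perm.two_le_of_mem_cycleType (by rw [hab]; simp),
        Equiv.Perm.two_le_of_mem_cycleType (by rw [hab]; simp), ?_, hab⟩
      rw [hab] at hsum
      simpa using hsum
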